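/- If X follows the Pareto type-I distribution with shape parameter α > 0, then for every t > 1, E[((α+1)/X)·(min(X,t) - 1)] = 1 - t^{-α}, i.e., the fixed point identity F(t) = E[((α+1)/X)(min(X,t)-1)] holds. -/

import Mathlib

open MeasureTheory Set

/-- Fixed point identity for the Pareto type-I distribution: if `X` has density
`α * x ^ (-(α+1))` on `[1, ∞)` with `α > 0`, then for every `t > 1`,
`E[((α+1)/X) * (min(X,t) - 1)] = 1 - t ^ (-α) = F(t)`. -/
theorem pareto_fixed_point_identity (α : ℝ) (hα : 0 < α) (t : ℝ) (ht : 1 < t) :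
    ∫ x in Set.Ioi (1:ℝ), ((α + 1) / x) * (min x t - 1) * (α * x ^ (-(α + 1)))
      = 1 - t ^ (-α) := by
  have ht0 : (0:ℝ) < t := by linarith
  set f : ℝ → ℝ := fun x => ((α + 1) / x) * (min x t - 1) * (α * x ^ (-(α + 1))) with hf
  -- integrability pieces
  have hcont : ContinuousOn f (Icc 1 t) := by
    apply ContinuousOn.mul
    · apply ContinuousOn.mul
      · exact (continuousOn_const.div continuousOn_id (fun x hx => by
          rcases hx with ⟨h1, _⟩; positivity))
      · exact (((continuous_id.min continuous_const).sub continuous_const).continuousOn)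
    · exact continuousOn_const.mul (ContinuousOn.rpow_const continuousOn_id
        fun x hx => Or.inl (by rcases hx with ⟨h1, _⟩; positivity))
  have hint1 : IntegrableOn f (Ioc 1 t) := by
    exact (hcont.integrableOn_Icc).mono_set Ioc_subset_Icc_self
  have hint2 : IntegrableOn f (Ioi t) := by
    have h := (integrableOn_Ioi_rpow_of_lt (a := -(α+2)) (by linarith) ht0).const_mul
      (α * (α + 1) * (t - 1))
    refine IntegrableOn.congr_fun h (fun x hx => ?_) measurableSet_Ioi
    have hx0 : (0:ℝ) < x := lt_trans ht0 hx
    have hmin : min x t = t := min_eq_right (le_of_lt hx)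
    have hpow : x ^ (-(α+2)) = x ^ (-(α+1)) * x⁻¹ := by
      rw [← Real.rpow_neg_one x, ← Real.rpow_add hx0]; congr 1; ring
    simp only [hf, hmin, hpow]
    field_simp
  have hsplit : Ioi (1:ℝ) = Ioc 1 t ∪ Ioi t := (Ioc_union_Ioi_eq_Ioi ht.le).symm
  rw [hsplit, setIntegral_union (Ioc_disjoint_Ioi le_rfl) measurableSet_Ioi hint1 hint2]
  -- first integral
  have hA : ∫ x in Ioc 1 t, f x = ((α+1) * (1 - t ^ (-α)) - α * (1 - t ^ (-(α+1)))) := by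
    rw [← intervalIntegral.integral_of_le ht.le]
    have heq : EqOn f (fun x => α * (α+1) * (x ^ (-(α+1)) - x ^ (-(α+2)))) (uIcc 1 t) := by
      intro x hx
      rw [uIcc_of_le ht.le] at hx
      have hx0 : (0:ℝ) < x := lt_of_lt_of_le zero_lt_one hx.1
      have hmin : min x t = x := min_eq_left hx.2
      have hpow : x ^ (-(α+2)) = x ^ (-(α+1)) * x⁻¹ := by
        rw [← Real.rpow_neg_one x, ← Real.rpow_add hx0]; congr 1; ring
      simp only [hf, hmin, hpow]
      field_simp
    rw [intervalIntegral.integral_congr heq]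
    have h0 : (0:ℝ) ∉ uIcc (1:ℝ) t := by
      rw [uIcc_of_le ht.le]; rintro ⟨h1, _⟩; linarith
    have i1 : IntervalIntegrable (fun x : ℝ => x ^ (-(α+1))) volume 1 t :=
      intervalIntegral.intervalIntegrable_rpow (Or.inr h0)
    have i2 : IntervalIntegrable (fun x : ℝ => x ^ (-(α+2))) volume 1 t :=
      intervalIntegral.intervalIntegrable_rpow (Or.inr h0)
    rw [intervalIntegral.integral_const_mul, intervalIntegral.integral_sub i1 i2,
      integral_rpow (Or.inr ⟨by linarith, h0⟩), integral_rpow (Or.inr ⟨by linarith, h0⟩)]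
    have e1 : -(α+1) + 1 = -α := by ring
    have e2 : -(α+2) + 1 = -(α+1) := by ring
    rw [e1, e2, Real.one_rpow, Real.one_rpow]
    generalize t ^ (-α) = u
    generalize t ^ (-(α+1)) = v
    have h1 : α ≠ 0 := hα.ne'
    have h2 : α + 1 ≠ 0 := by linarith
    have h3 : -α ≠ 0 := by simpa using h1
    have h4 : -1 - α ≠ 0 := by intro h; apply h2; linarith
    field_simp [h4]
    ring
  have hB : ∫ x in Ioi t, f x = α * (t - 1) * t ^ (-(α+1)) := by
    have heq : EqOn f (fun x => (α * (α+1) * (t-1)) * x ^ (-(α+2))) (Ioi t) := by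
      intro x hx
      have hx0 : (0:ℝ) < x := lt_trans ht0 hx
      have hmin : min x t = t := min_eq_right (le_of_lt hx)
      have hpow : x ^ (-(α+2)) = x ^ (-(α+1)) * x⁻¹ := by
        rw [← Real.rpow_neg_one x, ← Real.rpow_add hx0]; congr 1; ring
      simp only [hf, hmin, hpow]
      field_simp
    rw [setIntegral_congr_fun measurableSet_Ioi heq, integral_const_mul,
      integral_Ioi_rpow_of_lt (by linarith) ht0]
    have e2 : -(α+2) + 1 = -(α+1) := by ring
    rw [e2]
    have h4 : -1 - α ≠ 0 := by intro h; nlinarith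
    field_simp [h4]
  rw [hA, hB]
  have htp : t ^ (-(α+1)) = t ^ (-α) * t⁻¹ := by
    rw [← Real.rpow_neg_one t, ← Real.rpow_add ht0]; congr 1; ring
  rw [htp]
  field_simp
  ring
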